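/- Let {e, h, f} be an sl2-triple in a finite-dimensional semisimple Lie algebra g over an algebraically closed field of characteristic zero. Then g = z(f) ⊕ [g, e] as vector spaces, where z(f) = ker(ad f) and [g,e] = range(ad e). -/

import Mathlib

open LieModule Module

section Helpers

variable {K : Type*} [Field K]

/-- commuting powers through a shift relation -/
lemma pow_shift {M N : Type*} [AddCommGroup M] [Module K M] [AddCommGroup N] [Module K N]
    (π : M →ₗ[K] N) (a : Module.End K M) (b : Module.End K N)
    (hc : b ∘ₗ π = π ∘ₗ a) (k : ℕ) : (b ^ k) ∘ₗ π = π ∘ₗ (a ^ k) := by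
  induction k with
  | zero => ext x; simp
  | succ k ih =>
    ext x
    have h1 : ∀ z, b (π z) = π (a z) := fun z => LinearMap.congr_fun hc z
    have h2 : ∀ z, (b ^ k) (π z) = π ((a ^ k) z) := fun z => LinearMap.congr_fun ih z
    simp only [LinearMap.comp_apply, pow_succ, Module.End.mul_apply]
    rw [h1, h2]

lemma shift_maxGen {M : Type*} [AddCommGroup M] [Module K M]
    (φ ε : Module.End K M) (c : K) (hc : φ ∘ₗ ε = ε ∘ₗ φ + c • ε) (μ : K) {m : M}
    (hm : m ∈ φ.maxGenEigenspace μ) : ε m ∈ φ.maxGenEigenspace (μ + c) := by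
  rw [Module.End.mem_maxGenEigenspace] at hm ⊢
  obtain ⟨k, hk⟩ := hm
  refine ⟨k, ?_⟩
  have key : (φ - (μ + c) • 1) ∘ₗ ε = ε ∘ₗ (φ - μ • 1) := by
    ext x
    have h1 : φ (ε x) = ε (φ x) + c • ε x := LinearMap.congr_fun hc x
    simp only [LinearMap.sub_apply, LinearMap.comp_apply, LinearMap.smul_apply,
      Module.End.one_apply, map_sub, map_smul, h1, add_smul, LinearMap.add_apply]
    abel
  have := pow_shift ε (φ - μ • 1) (φ - (μ + c) • 1) key k
  calc ((φ - (μ + c) • 1) ^ k) (ε m) = (((φ - (μ + c) • 1) ^ k) ∘ₗ ε) m := rfl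
    _ = (ε ∘ₗ ((φ - μ • 1) ^ k)) m := by rw [this]
    _ = ε (((φ - μ • 1) ^ k) m) := rfl
    _ = 0 := by rw [hk, map_zero]

lemma exists_eigenvec {V : Type*} [AddCommGroup V] [Module K V] [IsAlgClosed K]
    [FiniteDimensional K V] (φ : Module.End K V) (W : Submodule K V) (hW : W ≠ ⊥)
    (hinv : ∀ x ∈ W, φ x ∈ W) : ∃ x ∈ W, x ≠ 0 ∧ ∃ μ : K, φ x = μ • x := by
  haveI : Nontrivial W := Submodule.nontrivial_iff_ne_bot.mpr hW
  obtain ⟨μ, hμ⟩ := Module.End.exists_eigenvalue (φ.restrict hinv)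
  obtain ⟨v, hv⟩ := hμ.exists_hasEigenvector
  refine ⟨v.1, v.2, by simpa using hv.right, μ, ?_⟩
  have := hv.apply_eq_smul
  have h2 := congrArg Subtype.val this
  simpa [LinearMap.restrict_apply] using h2

end Helpers

section Key

variable {K 𝔤 M : Type*} [Field K] [IsAlgClosed K] [CharZero K]
  [LieRing 𝔤] [LieAlgebra K 𝔤]
  [AddCommGroup M] [Module K M] [LieRingModule 𝔤 M] [LieModule K 𝔤 M] [Module.Finite K M]
  {h e f : 𝔤}

lemma bad_lemma (t : IsSl2Triple h e f) {μ : K}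
    (hU : LinearMap.ker (toEnd K 𝔤 M e) ⊓ (toEnd K 𝔤 M h).maxGenEigenspace μ ≠ ⊥) :
    ∃ n : ℕ, μ = n := by
  set φ := toEnd K 𝔤 M h with hφ
  have hinv : ∀ x ∈ LinearMap.ker (toEnd K 𝔤 M e) ⊓ φ.maxGenEigenspace μ,
      φ x ∈ LinearMap.ker (toEnd K 𝔤 M e) ⊓ φ.maxGenEigenspace μ := by
    intro x hx
    obtain ⟨hx1, hx2⟩ := Submodule.mem_inf.mp hx
    rw [Submodule.mem_inf]
    constructor
    · have hx1' : ⁅e, x⁆ = 0 := hx1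
      have heh : ⁅e, h⁆ = -((2:K) • e) := by rw [← lie_skew, t.lie_h_e_smul K]
      have : ⁅e, ⁅h, x⁆⁆ = 0 := by
        rw [leibniz_lie e h x, hx1', lie_zero, add_zero, heh, neg_lie, smul_lie, hx1',
          smul_zero, neg_zero]
      exact this
    · exact Module.End.mapsTo_maxGenEigenspace_of_comm (Commute.refl φ) μ hx2
  obtain ⟨u, huW, hu0, c, hc⟩ := exists_eigenvec φ _ hU hinv
  obtain ⟨hu1, hu2⟩ := Submodule.mem_inf.mp huW
  have hcμ : c = μ := by
    obtain ⟨k, hk⟩ := (Module.End.mem_maxGenEigenspace _ _ _).mp hu2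
    by_contra hne
    have key : ∀ k : ℕ, ((φ - μ • 1) ^ k) u = (c - μ) ^ k • u := by
      intro k
      induction k with
      | zero => simp
      | succ k ih =>
        have huu : (φ - μ • 1) u = (c - μ) • u := by
          simp [LinearMap.sub_apply, LinearMap.smul_apply, hc, sub_smul]
        rw [pow_succ, Module.End.mul_apply, huu, map_smul, ih, smul_smul, ← pow_succ']
    rw [key k] at hk
    exact hu0 (by simpa [smul_eq_zero, pow_eq_zero_iff, sub_eq_zero, hne] using hk)
  have P : t.HasPrimitiveVectorWith u μ :=
    { ne_zero := hu0
      lie_h := by rw [← hcμ]; exact hc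
      lie_e := hu1 }
  exact P.exists_nat


lemma key_disjoint (t : IsSl2Triple h e f)
    (hspan : Submodule.span K ({h, e, f} : Set 𝔤) = ⊤) :
    Disjoint (LinearMap.ker (toEnd K 𝔤 M f)) (LinearMap.range (toEnd K 𝔤 M e)) := by
  rw [disjoint_iff]
  by_contra hW
  set φ := toEnd K 𝔤 M h with hφ
  set W := LinearMap.ker (toEnd K 𝔤 M f) ⊓ LinearMap.range (toEnd K 𝔤 M e) with hWdef
  have hinv : ∀ x ∈ W, φ x ∈ W := by
    intro x hx
    obtain ⟨hx1, hx2⟩ := Submodule.mem_inf.mp hx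
    rw [Submodule.mem_inf]
    constructor
    · have hx1' : ⁅f, x⁆ = 0 := hx1
      have hfh : ⁅f, h⁆ = (2:K) • f := by
        rw [← lie_skew, t.lie_lie_smul_f K, neg_neg]
      show ⁅f, ⁅h, x⁆⁆ = 0
      rw [leibniz_lie f h x, hx1', lie_zero, add_zero, hfh, smul_lie, hx1', smul_zero]
    · obtain ⟨y, hy⟩ := hx2
      refine ⟨⁅h, y⁆ + (2:K) • y, ?_⟩
      show ⁅e, ⁅h, y⁆ + (2:K) • y⁆ = φ x
      rw [lie_add, lie_smul]
      have : φ x = ⁅h, ⁅e, y⁆⁆ := by rw [← hy]; rfl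
      rw [this, leibniz_lie h e y, t.lie_h_e_smul K, smul_lie, add_comm]
  obtain ⟨x, hxW, hx0, μ, hμ⟩ := exists_eigenvec φ W hW hinv
  obtain ⟨hx1, hx2⟩ := Submodule.mem_inf.mp hxW
  have P : t.symm.HasPrimitiveVectorWith x (-μ) := by
    refine ⟨hx0, ?_, hx1⟩
    have hhx : ⁅h, x⁆ = μ • x := hμ
    rw [neg_lie, hhx, neg_smul]
  obtain ⟨n, hn⟩ := P.exists_nat
  have hμn : μ = -(n : K) := by rw [← hn, neg_neg]
  set ψ : ℕ → M := fun i => ((toEnd K 𝔤 M e) ^ i) x with hψ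
  have hψ0 : ψ 0 = x := by simp [hψ]
  have hψsucc : ∀ i, ⁅e, ψ i⁆ = ψ (i + 1) := by
    intro i
    show (toEnd K 𝔤 M e) (ψ i) = ψ (i + 1)
    simp only [hψ, ← Module.End.mul_apply, ← pow_succ']
  have hψh : ∀ i, ⁅h, ψ i⁆ = ((2 * i : K) - n) • ψ i := by
    intro i
    have := P.lie_h_pow_toEnd_f i
    rw [neg_lie, neg_eq_iff_eq_neg] at this
    rw [this, ← neg_smul]
    congr 1
    rw [hn]
    ring
  have hψf : ∀ i, ⁅f, ψ (i + 1)⁆ = (((i : K) + 1) * ((n : K) - i)) • ψ i := by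
    intro i
    have := P.lie_e_pow_succ_toEnd_f i
    rw [this, hn]
  have hψtop : ψ (n + 1) = 0 := P.pow_toEnd_f_eq_zero_of_eq_nat hn
  set S' : Submodule K M := Submodule.span K (Set.range fun i : Fin (n + 1) => ψ i) with hS'
  have hgen_mem : ∀ i : Fin (n + 1), ψ (i : ℕ) ∈ S' := fun i =>
    Submodule.subset_span ⟨i, rfl⟩
  have hSx : x ∈ S' := by rw [← hψ0]; exact hgen_mem ⟨0, Nat.succ_pos n⟩
  have hψS : ∀ i : ℕ, ψ i ∈ S' := by
    intro i
    by_cases hi : i ≤ n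
    · exact hgen_mem ⟨i, Nat.lt_succ_of_le hi⟩
    · have : ψ i = 0 := by
        obtain ⟨j, rfl⟩ : ∃ j, i = (n + 1) + j := ⟨i - (n+1), by omega⟩
        show ((toEnd K 𝔤 M e) ^ ((n+1) + j)) x = 0
        rw [add_comm, pow_add, Module.End.mul_apply]
        have : ((toEnd K 𝔤 M e) ^ (n+1)) x = 0 := hψtop
        rw [this, map_zero]
      rw [this]; exact S'.zero_mem
  have hall : ∀ z : 𝔤, ∀ m ∈ S', ⁅z, m⁆ ∈ S' := by
    have hgen : ∀ z ∈ ({h, e, f} : Set 𝔤), ∀ m ∈ S', ⁅z, m⁆ ∈ S' := by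
      rintro z hz m hm
      induction hm using Submodule.span_induction with
      | mem m hmem =>
        obtain ⟨i, rfl⟩ := hmem
        show ⁅z, ψ (i : ℕ)⁆ ∈ S'
        rcases hz with rfl | rfl | rfl
        · rw [hψh]; exact S'.smul_mem _ (hgen_mem i)
        · rw [hψsucc]; exact hψS _
        · rcases hnat : (i : ℕ) with _ | j
          · rw [hψ0]
            have hzx : ⁅z, x⁆ = 0 := hx1
            rw [hzx]; exact S'.zero_mem
          · rw [hψf]; exact S'.smul_mem _ (hψS _)
      | zero => rw [lie_zero]; exact S'.zero_mem
      | add a b _ _ ha hb => rw [lie_add]; exact S'.add_mem ha hb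
      | smul c a _ ha => rw [lie_smul]; exact S'.smul_mem _ ha
    intro z m hm
    have hz : z ∈ Submodule.span K ({h, e, f} : Set 𝔤) := by rw [hspan]; trivial
    induction hz using Submodule.span_induction with
    | mem z hzmem => exact hgen z hzmem m hm
    | zero => rw [zero_lie]; exact S'.zero_mem
    | add a b _ _ ha hb => rw [add_lie]; exact S'.add_mem ha hb
    | smul c a _ ha => rw [smul_lie]; exact S'.smul_mem _ ha
  set SL : LieSubmodule K 𝔤 M := { S' with lie_mem := fun {z m} hm => hall z m hm } with hSL
  -- decomposition of a preimage of x
  obtain ⟨y, hy⟩ := hx2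
  set ν : K := -(n : K) - 2 with hν
  have hsup : (⨆ μ' : K, φ.maxGenEigenspace μ') = ⊤ :=
    Module.End.iSup_maxGenEigenspace_eq_top φ
  have hy_top : y ∈ φ.maxGenEigenspace ν ⊔ ⨆ μ' ∈ {μ' : K | μ' ≠ ν}, φ.maxGenEigenspace μ' := by
    have hle : (⊤ : Submodule K M) ≤
        φ.maxGenEigenspace ν ⊔ ⨆ μ' ∈ {μ' : K | μ' ≠ ν}, φ.maxGenEigenspace μ' := by
      rw [← hsup]
      refine iSup_le fun μ' => ?_
      by_cases hμ' : μ' = ν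
      · rw [hμ']; exact le_sup_left
      · exact le_trans (le_iSup₂ (f := fun μ'' (_ : μ'' ∈ {μ' : K | μ' ≠ ν}) =>
          φ.maxGenEigenspace μ'') μ' hμ') le_sup_right
    exact hle trivial
  obtain ⟨y', hy', y'', hy'', hsum⟩ := Submodule.mem_sup.mp hy_top
  have hrel : φ ∘ₗ (toEnd K 𝔤 M e) = (toEnd K 𝔤 M e) ∘ₗ φ + (2:K) • (toEnd K 𝔤 M e) := by
    ext z
    show ⁅h, ⁅e, z⁆⁆ = ⁅e, ⁅h, z⁆⁆ + (2:K) • ⁅e, z⁆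
    rw [leibniz_lie h e z, t.lie_h_e_smul K, smul_lie, add_comm]
  have hshift : ∀ (μ' : K) (m : M), m ∈ φ.maxGenEigenspace μ' →
      (toEnd K 𝔤 M e) m ∈ φ.maxGenEigenspace (μ' + 2) :=
    fun μ' m hm => shift_maxGen φ (toEnd K 𝔤 M e) 2 hrel μ' hm
  have hEy'' : (toEnd K 𝔤 M e) y'' ∈
      ⨆ μ' ∈ {μ' : K | μ' ≠ -(n:K)}, φ.maxGenEigenspace μ' := by
    rw [← iSup_subtype''] at hy''
    refine Submodule.iSup_induction (ι := {μ' : K // μ' ∈ {μ' : K | μ' ≠ ν}})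
      (p := fun μ' => φ.maxGenEigenspace μ'.1)
      (motive := fun m => (toEnd K 𝔤 M e) m ∈
        ⨆ μ' ∈ {μ' : K | μ' ≠ -(n:K)}, φ.maxGenEigenspace μ') hy'' ?_ ?_ ?_
    · rintro ⟨μ', hμ'⟩ m hm
      have h1 : (toEnd K 𝔤 M e) m ∈ φ.maxGenEigenspace (μ' + 2) := hshift μ' m hm
      have h2 : μ' + 2 ≠ -(n:K) := by
        intro hcon
        apply hμ'
        rw [hν]
        linear_combination hcon
      exact le_trans (le_iSup₂ (f := fun μ'' (_ : μ'' ∈ {μ' : K | μ' ≠ -(n:K)}) =>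
        φ.maxGenEigenspace μ'') (μ' + 2) h2) le_rfl h1
    · show (toEnd K 𝔤 M e) 0 ∈ _
      rw [map_zero]; exact Submodule.zero_mem _
    · intro a b ha hb
      show (toEnd K 𝔤 M e) (a + b) ∈ _
      rw [map_add]; exact Submodule.add_mem _ ha hb
  have hEy' : (toEnd K 𝔤 M e) y' ∈ φ.maxGenEigenspace (-(n:K)) := by
    have := hshift ν y' hy'
    have hν2 : ν + 2 = -(n:K) := by rw [hν]; ring
    rwa [hν2] at this
  have hx_eig : x ∈ φ.maxGenEigenspace (-(n:K)) := by
    rw [Module.End.mem_maxGenEigenspace]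
    refine ⟨1, ?_⟩
    simp [LinearMap.sub_apply, hμ, hμn, sub_smul]
  have hsum' : (toEnd K 𝔤 M e) y' + (toEnd K 𝔤 M e) y'' = x := by
    rw [← map_add, hsum, hy]
  have hind := Module.End.independent_maxGenEigenspace (R := K) (M := M) φ
  have hEy''0 : (toEnd K 𝔤 M e) y'' = 0 := by
    have hmem1 : (toEnd K 𝔤 M e) y'' ∈ φ.maxGenEigenspace (-(n:K)) := by
      have : (toEnd K 𝔤 M e) y'' = x - (toEnd K 𝔤 M e) y' := by
        rw [← hsum']; abel
      rw [this]
      exact Submodule.sub_mem _ hx_eig hEy'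
    have hd := hind (-(n:K))
    exact (Submodule.mem_bot K).mp (hd.le_bot ⟨hmem1, hEy''⟩)
  have hxy' : ⁅e, y'⁆ = x := by
    have : (toEnd K 𝔤 M e) y' = x := by rw [← hsum', hEy''0, add_zero]
    exact this
  -- quotient
  by_cases hy'0 : LieSubmodule.Quotient.mk' SL y' = 0
  · -- y' ∈ SL, derive y' = 0
    have hy'S : y' ∈ S' := (LieSubmodule.Quotient.mk_eq_zero SL).mp hy'0
    have hSle : S' ≤ ⨆ μ' ∈ {μ' : K | μ' ≠ ν}, φ.maxGenEigenspace μ' := by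
      rw [hS']
      refine Submodule.span_le.mpr ?_
      rintro _ ⟨i, rfl⟩
      have heig : ψ (i:ℕ) ∈ φ.maxGenEigenspace ((2 * (i:ℕ) : K) - n) := by
        rw [Module.End.mem_maxGenEigenspace]
        refine ⟨1, ?_⟩
        have := hψh (i:ℕ)
        simp only [pow_one, LinearMap.sub_apply, LinearMap.smul_apply, Module.End.one_apply]
        have hφψ : φ (ψ (i:ℕ)) = ((2 * (i:ℕ) : K) - n) • ψ (i:ℕ) := this
        rw [hφψ, sub_self]
      have hne : ((2 * (i:ℕ) : K) - n) ≠ ν := by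
        rw [hν]
        intro hcon
        have : ((2 * (i:ℕ) + 2 : ℕ) : K) = 0 := by push_cast; linear_combination hcon
        have := Nat.cast_eq_zero.mp this
        omega
      exact le_trans (le_iSup₂ (f := fun μ'' (_ : μ'' ∈ {μ' : K | μ' ≠ ν}) =>
        φ.maxGenEigenspace μ'') _ hne) le_rfl heig
    have : y' ∈ φ.maxGenEigenspace ν ⊓ ⨆ μ' ∈ {μ' : K | μ' ≠ ν}, φ.maxGenEigenspace μ' :=
      ⟨hy', hSle hy'S⟩
    have hy'00 : y' = 0 := (Submodule.mem_bot K).mp ((hind ν).le_bot this)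
    apply hx0
    rw [← hxy', hy'00, lie_zero]
  · -- apply bad lemma in the quotient
    have hxSL : x ∈ SL := hSx
    have hker : LieSubmodule.Quotient.mk' SL y' ∈
        LinearMap.ker (toEnd K 𝔤 (M ⧸ SL) e) ⊓ (toEnd K 𝔤 (M ⧸ SL) h).maxGenEigenspace ν := by
      rw [Submodule.mem_inf]
      constructor
      · rw [LinearMap.mem_ker]
        show ((toEnd K 𝔤 (M ⧸ SL) e) ∘ₗ
          (LieSubmodule.Quotient.mk' SL : M →ₗ[K] M ⧸ SL)) y' = 0
        rw [LieSubmodule.Quotient.toEnd_comp_mk']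
        show (LieSubmodule.Quotient.mk' SL : M →ₗ[K] M ⧸ SL) ((toEnd K 𝔤 M e) y') = 0
        have h2 : (toEnd K 𝔤 M e) y' = x := hxy'
        rw [h2]
        exact (LieSubmodule.Quotient.mk_eq_zero SL).mpr hxSL
      · rw [Module.End.mem_maxGenEigenspace]
        obtain ⟨k, hk⟩ := (Module.End.mem_maxGenEigenspace _ _ _).mp hy'
        refine ⟨k, ?_⟩
        have hcomm : (toEnd K 𝔤 (M ⧸ SL) h - ν • 1) ∘ₗ
            (LieSubmodule.Quotient.mk' SL : M →ₗ[K] M ⧸ SL) =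
            (LieSubmodule.Quotient.mk' SL : M →ₗ[K] M ⧸ SL) ∘ₗ (φ - ν • 1) := by
          ext z
          have h1 := LinearMap.congr_fun (LieSubmodule.Quotient.toEnd_comp_mk' (N := SL) h) z
          simp only [LinearMap.comp_apply] at h1 ⊢
          simp only [LinearMap.sub_apply, LinearMap.smul_apply, Module.End.one_apply, h1,
            map_sub, map_smul]
          rfl
        show ((((toEnd K 𝔤 (M ⧸ SL) h) - ν • 1) ^ k) ∘ₗ
          (LieSubmodule.Quotient.mk' SL : M →ₗ[K] M ⧸ SL)) y' = 0
        rw [pow_shift (LieSubmodule.Quotient.mk' SL : M →ₗ[K] M ⧸ SL) (φ - ν • 1)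
            (toEnd K 𝔤 (M ⧸ SL) h - ν • 1) hcomm k]
        show (LieSubmodule.Quotient.mk' SL : M →ₗ[K] M ⧸ SL) (((φ - ν • 1) ^ k) y') = 0
        rw [hk, map_zero]
    have hne : LinearMap.ker (toEnd K 𝔤 (M ⧸ SL) e) ⊓
        (toEnd K 𝔤 (M ⧸ SL) h).maxGenEigenspace ν ≠ ⊥ := by
      intro hbot
      apply hy'0
      have := hker
      rw [hbot, Submodule.mem_bot] at this
      exact this
    obtain ⟨m, hm⟩ := bad_lemma (M := M ⧸ SL) t hne
    rw [hν] at hm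
    have hcast : ((m + n + 2 : ℕ) : K) = 0 := by push_cast; linear_combination -hm
    have := Nat.cast_eq_zero.mp hcast
    omega

end Key

/-- For an `sl₂`-triple `{e, h, f}` in a finite-dimensional semisimple Lie algebra over an
algebraically closed field of characteristic zero, `g = z(f) ⊕ [g, e]` as vector spaces. -/
theorem stmt_8 {K L : Type*} [Field K] [IsAlgClosed K] [CharZero K]
    [LieRing L] [LieAlgebra K L] [Module.Finite K L] [LieAlgebra.IsSemisimple K L]
    (e h f : L) (hhe : ⁅h, e⁆ = (2 : K) • e) (hhf : ⁅h, f⁆ = (-2 : K) • f)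
    (hef : ⁅e, f⁆ = h) :
    IsCompl (LinearMap.ker (LieAlgebra.ad K L f))
      (LinearMap.range (LieAlgebra.ad K L e)) := by
  by_cases hh : h = 0
  · have he : e = 0 := by
      have : (2 : K) • e = 0 := by rw [← hhe, hh, zero_lie]
      simpa [smul_eq_zero, (by norm_num : (2:K) ≠ 0)] using this
    have hf : f = 0 := by
      have : (-2 : K) • f = 0 := by rw [← hhf, hh, zero_lie]
      simpa [smul_eq_zero, (by norm_num : (-2:K) ≠ 0)] using this
    have hadf : LieAlgebra.ad K L f = 0 := by exact hf ▸ (LieAlgebra.ad K L).map_zero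
    have hade : LieAlgebra.ad K L e = 0 := by exact he ▸ (LieAlgebra.ad K L).map_zero
    rw [hadf, hade, LinearMap.ker_zero, LinearMap.range_zero]
    exact isCompl_top_bot
  · have t : IsSl2Triple h e f :=
      { h_ne_zero := hh
        lie_e_f := hef
        lie_h_e_nsmul := by rw [hhe, two_smul, two_smul ℕ]
        lie_h_f_nsmul := by rw [hhf, neg_smul, two_smul, two_smul ℕ] }
    -- the subalgebra spanned by h, e, f
    have hmemh : h ∈ Submodule.span K ({h, e, f} : Set L) :=
      Submodule.subset_span (by simp)
    have hmeme : e ∈ Submodule.span K ({h, e, f} : Set L) :=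
      Submodule.subset_span (by simp)
    have hmemf : f ∈ Submodule.span K ({h, e, f} : Set L) :=
      Submodule.subset_span (by simp)
    have hclosed : ∀ x ∈ Submodule.span K ({h, e, f} : Set L),
        ∀ y ∈ Submodule.span K ({h, e, f} : Set L),
        ⁅x, y⁆ ∈ Submodule.span K ({h, e, f} : Set L) := by
      have hbase : ∀ x ∈ ({h, e, f} : Set L), ∀ y ∈ ({h, e, f} : Set L),
          ⁅x, y⁆ ∈ Submodule.span K ({h, e, f} : Set L) := by
        rintro x (rfl | rfl | rfl) y (rfl | rfl | rfl)
        · rw [lie_self]; exact Submodule.zero_mem _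
        · rw [hhe]; exact Submodule.smul_mem _ _ hmeme
        · rw [hhf]; exact Submodule.smul_mem _ _ hmemf
        · rw [← lie_skew, hhe]
          exact Submodule.neg_mem _ (Submodule.smul_mem _ _ hmeme)
        · rw [lie_self]; exact Submodule.zero_mem _
        · rw [hef]; exact hmemh
        · rw [← lie_skew, hhf]
          exact Submodule.neg_mem _ (Submodule.smul_mem _ _ hmemf)
        · rw [← lie_skew, hef]; exact Submodule.neg_mem _ hmemh
        · rw [lie_self]; exact Submodule.zero_mem _
      intro x hx y hy
      induction hx using Submodule.span_induction with
      | mem a ha =>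
        induction hy using Submodule.span_induction with
        | mem b hb => exact hbase a ha b hb
        | zero => rw [lie_zero]; exact Submodule.zero_mem _
        | add b c _ _ hb hc => rw [lie_add]; exact Submodule.add_mem _ hb hc
        | smul c b _ hb => rw [lie_smul]; exact Submodule.smul_mem _ _ hb
      | zero => rw [zero_lie]; exact Submodule.zero_mem _
      | add a b _ _ ha hb => rw [add_lie]; exact Submodule.add_mem _ ha hb
      | smul c a _ ha => rw [smul_lie]; exact Submodule.smul_mem _ _ ha
    set 𝔰 : LieSubalgebra K L :=
      { Submodule.span K ({h, e, f} : Set L) with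
        lie_mem' := fun {x y} hx hy => hclosed x hx y hy } with h𝔰
    set H : 𝔰 := ⟨h, hmemh⟩ with hH
    set E : 𝔰 := ⟨e, hmeme⟩ with hE
    set F : 𝔰 := ⟨f, hmemf⟩ with hF
    have t' : IsSl2Triple H E F :=
      { h_ne_zero := fun hc => hh (congrArg Subtype.val hc)
        lie_e_f := Subtype.ext (by
          rw [LieSubalgebra.coe_bracket]
          exact hef)
        lie_h_e_nsmul := Subtype.ext (by
          rw [LieSubalgebra.coe_bracket]
          push_cast
          exact t.lie_h_e_nsmul)
        lie_h_f_nsmul := Subtype.ext (by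
          rw [LieSubalgebra.coe_bracket]
          push_cast
          exact t.lie_h_f_nsmul) }
    have hspan : Submodule.span K ({H, E, F} : Set 𝔰) = ⊤ := by
      rw [Submodule.eq_top_iff']
      rintro ⟨z, hz⟩
      induction hz using Submodule.span_induction with
      | mem a ha =>
        rcases ha with rfl | rfl | rfl
        · exact Submodule.subset_span (by left; rfl)
        · exact Submodule.subset_span (by right; left; rfl)
        · exact Submodule.subset_span (by right; right; rfl)
      | zero => exact Submodule.zero_mem _
      | add a b ha hb iha ihb => exact Submodule.add_mem _ (iha) (ihb)
      | smul c a ha iha => exact Submodule.smul_mem _ _ (iha)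
    have hspan2 : Submodule.span K ({-H, F, E} : Set 𝔰) = ⊤ := by
      rw [eq_top_iff, ← hspan]
      refine Submodule.span_le.mpr ?_
      rintro z (rfl | rfl | rfl)
      · have hmem : -H ∈ Submodule.span K ({-H, F, E} : Set 𝔰) :=
          Submodule.subset_span (by left; rfl)
        simpa using Submodule.neg_mem _ hmem
      · exact Submodule.subset_span (by right; right; rfl)
      · exact Submodule.subset_span (by right; left; rfl)
    have hadf : LieModule.toEnd K 𝔰 L F = LieAlgebra.ad K L f := by
      ext m
      rw [LieModule.toEnd_apply_apply, LieAlgebra.ad_apply,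
        LieSubalgebra.coe_bracket_of_module]
    have hade : LieModule.toEnd K 𝔰 L E = LieAlgebra.ad K L e := by
      ext m
      rw [LieModule.toEnd_apply_apply, LieAlgebra.ad_apply,
        LieSubalgebra.coe_bracket_of_module]
    have hadh : True := trivial
    have d1 : Disjoint (LinearMap.ker (LieAlgebra.ad K L f))
        (LinearMap.range (LieAlgebra.ad K L e)) := by
      rw [← hadf, ← hade]
      exact key_disjoint t' hspan
    have d2 : Disjoint (LinearMap.ker (LieAlgebra.ad K L e))
        (LinearMap.range (LieAlgebra.ad K L f)) := by
      rw [← hadf, ← hade]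
      exact key_disjoint t'.symm hspan2
    -- dimension count
    have hfd : FiniteDimensional K L := inferInstance
    have rn1 := LinearMap.finrank_range_add_finrank_ker (LieAlgebra.ad K L e)
    have rn2 := LinearMap.finrank_range_add_finrank_ker (LieAlgebra.ad K L f)
    have hs1 := Submodule.finrank_sup_add_finrank_inf_eq
      (LinearMap.ker (LieAlgebra.ad K L f)) (LinearMap.range (LieAlgebra.ad K L e))
    have hs2 := Submodule.finrank_sup_add_finrank_inf_eq
      (LinearMap.ker (LieAlgebra.ad K L e)) (LinearMap.range (LieAlgebra.ad K L f))
    rw [disjoint_iff.mp d1] at hs1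
    rw [disjoint_iff.mp d2] at hs2
    have hle1 := Submodule.finrank_le
      (LinearMap.ker (LieAlgebra.ad K L f) ⊔ LinearMap.range (LieAlgebra.ad K L e))
    have hle2 := Submodule.finrank_le
      (LinearMap.ker (LieAlgebra.ad K L e) ⊔ LinearMap.range (LieAlgebra.ad K L f))
    simp only [finrank_bot, add_zero] at hs1 hs2
    have htop : LinearMap.ker (LieAlgebra.ad K L f) ⊔
        LinearMap.range (LieAlgebra.ad K L e) = ⊤ := by
      apply Submodule.eq_top_of_finrank_eq
      omega
    exact ⟨d1, codisjoint_iff.mpr htop⟩
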